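/- arXiv:2404.08272 — 3 statements merged into one kernel-verified Lean document; each statement's English description precedes it below -/
import Mathlib

section
/- (Coercivity on finite graphs) Under hypotheses (A) and (H₁), the energy functional φ_V(u,v) = (1/p)‖u‖_{W^{m₁,p}(V)}^p + (1/q)‖v‖_{W^{m₂,q}(V)}^q − ∫_V F(x,u,v)dμ is coercive on X = W^{m₁,p}(V) × W^{m₂,q}(V), i.e. φ_V(u,v) → +∞ as ‖u‖_{W^{m₁,p}} + ‖v‖_{W^{m₂,q}} → ∞. -/
open Finset

/-- The graph Laplacian on a weighted finite graph. -/
noncomputable def graphLap {V : Type*} [Fintype V] (μ : V → ℝ) (E : V → V → Prop)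
    [DecidableRel E] (w : V → V → ℝ) (u : V → ℝ) : V → ℝ :=
  fun x => (1 / μ x) * ∑ y, if E x y then w x y * (u y - u x) else 0

/-- The gradient length. -/
noncomputable def gradLen {V : Type*} [Fintype V] (μ : V → ℝ) (E : V → V → Prop)
    [DecidableRel E] (w : V → V → ℝ) (ψ : V → ℝ) : V → ℝ :=
  fun x => Real.sqrt ((1 / (2 * μ x)) * ∑ y, if E x y then w x y * (ψ y - ψ x) ^ 2 else 0)

/-- The length of the m-th order gradient. -/
noncomputable def gradLenM {V : Type*} [Fintype V] (μ : V → ℝ) (E : V → V → Prop)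
    [DecidableRel E] (w : V → V → ℝ) (m : ℕ) (ψ : V → ℝ) : V → ℝ :=
  if m % 2 = 1 then gradLen μ E w ((graphLap μ E w)^[(m - 1) / 2] ψ)
  else fun x => |(graphLap μ E w)^[m / 2] ψ x|

/-- The Sobolev norm `‖u‖_{W^{m,l}(V)} = (∫_V (|∇^m u|^l + h|u|^l) dμ)^{1/l}`. -/
noncomputable def sobNorm {V : Type*} [Fintype V] (μ : V → ℝ) (E : V → V → Prop)
    [DecidableRel E] (w : V → V → ℝ) (m : ℕ) (l : ℝ) (h : V → ℝ) (u : V → ℝ) : ℝ :=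
  (∑ x, μ x * ((gradLenM μ E w m u x) ^ l + h x * |u x| ^ l)) ^ (1 / l)

lemma gradLenM_nonneg {V : Type*} [Fintype V] (μ : V → ℝ) (E : V → V → Prop)
    [DecidableRel E] (w : V → V → ℝ) (m : ℕ) (ψ : V → ℝ) (x : V) :
    0 ≤ gradLenM μ E w m ψ x := by
  unfold gradLenM
  split_ifs
  · exact Real.sqrt_nonneg _
  · exact abs_nonneg _

lemma ftc_bound_nonneg (g : ℝ → ℝ) (hg : ContDiff ℝ 1 g) (c₁ c₂ e : ℝ)
    (hc₁ : 0 ≤ c₁) (hc₂ : 0 ≤ c₂) (he : 0 < e)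
    (hbd : ∀ s, |deriv g s| ≤ c₁ * |s| ^ e + c₂) (s : ℝ) (hs : 0 ≤ s) :
    |g s - g 0| ≤ c₁ * s ^ (e + 1) / (e + 1) + c₂ * s := by
  have hcont : Continuous (deriv g) := hg.continuous_deriv le_rfl
  have hftc : ∫ r in (0:ℝ)..s, deriv g r = g s - g 0 :=
    intervalIntegral.integral_deriv_eq_sub
      (fun x _ => (hg.differentiable one_ne_zero).differentiableAt)
      (hcont.intervalIntegrable _ _)
  rw [← hftc]
  have hint1 : IntervalIntegrable (fun r => c₁ * r ^ e) MeasureTheory.volume 0 s :=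
    (intervalIntegral.intervalIntegrable_rpow' (by linarith)).const_mul c₁
  have hint2 : IntervalIntegrable (fun r => c₁ * r ^ e + c₂) MeasureTheory.volume 0 s :=
    hint1.add intervalIntegrable_const
  have h1 : |∫ r in (0:ℝ)..s, deriv g r| ≤ ∫ r in (0:ℝ)..s, |deriv g r| := by
    simpa [Real.norm_eq_abs] using
      intervalIntegral.norm_integral_le_integral_norm (f := deriv g) hs
  have h2 : (∫ r in (0:ℝ)..s, |deriv g r|) ≤ ∫ r in (0:ℝ)..s, (c₁ * r ^ e + c₂) := by
    refine intervalIntegral.integral_mono_on hs (hcont.abs.intervalIntegrable _ _) hint2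
      (fun r hr => ?_)
    calc |deriv g r| ≤ c₁ * |r| ^ e + c₂ := hbd r
      _ = c₁ * r ^ e + c₂ := by rw [abs_of_nonneg hr.1]
  have h3 : (∫ r in (0:ℝ)..s, (c₁ * r ^ e + c₂)) = c₁ * s ^ (e + 1) / (e + 1) + c₂ * s := by
    rw [intervalIntegral.integral_add hint1 intervalIntegrable_const,
      intervalIntegral.integral_const_mul, integral_rpow (Or.inl (by linarith)),
      intervalIntegral.integral_const, Real.zero_rpow (by positivity), smul_eq_mul]
    ring
  calc |∫ r in (0:ℝ)..s, deriv g r| ≤ ∫ r in (0:ℝ)..s, |deriv g r| := h1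
    _ ≤ _ := h2
    _ = _ := h3

lemma ftc_bound (g : ℝ → ℝ) (hg : ContDiff ℝ 1 g) (c₁ c₂ e : ℝ)
    (hc₁ : 0 ≤ c₁) (hc₂ : 0 ≤ c₂) (he : 0 < e)
    (hbd : ∀ s, |deriv g s| ≤ c₁ * |s| ^ e + c₂) (s : ℝ) :
    |g s - g 0| ≤ c₁ * |s| ^ (e + 1) / (e + 1) + c₂ * |s| := by
  rcases le_total 0 s with hs | hs
  · rw [abs_of_nonneg hs]; exact ftc_bound_nonneg g hg c₁ c₂ e hc₁ hc₂ he hbd s hs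
  · have hg' : ContDiff ℝ 1 (fun r => g (-r)) := hg.comp contDiff_neg
    have hbd' : ∀ r, |deriv (fun r => g (-r)) r| ≤ c₁ * |r| ^ e + c₂ := by
      intro r
      rw [deriv_comp_neg, abs_neg]
      simpa [abs_neg] using hbd (-r)
    have := ftc_bound_nonneg (fun r => g (-r)) hg' c₁ c₂ e hc₁ hc₂ he hbd' (-s) (by linarith)
    rw [abs_of_nonpos hs]
    simpa using this

lemma F_pointwise_bound (p q : ℝ) (hp : 1 < p) (hq : 1 < q)
    (G : ℝ → ℝ → ℝ) (hG : ContDiff ℝ 1 (fun st : ℝ × ℝ => G st.1 st.2))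
    (a₁ a₂ a₃ a₄ : ℝ) (ha₁ : 0 ≤ a₁) (ha₂ : 0 ≤ a₂) (ha₃ : 0 ≤ a₃) (ha₄ : 0 ≤ a₄)
    (hGs : ∀ s t, |deriv (fun s' => G s' t) s| ≤ a₁ * |s| ^ (p - 1) + a₂ * |t| ^ ((p*q-q)/p))
    (hGt : ∀ s t, |deriv (fun t' => G s t') t| ≤ a₃ * |s| ^ ((p*q-p)/q) + a₄ * |t| ^ (q - 1))
    (s t : ℝ) :
    G s t ≤ |G 0 0| + (a₁ + a₂)/p * |s|^p + ((p*q-q)/p * a₂ + a₄)/q * |t|^q := by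
  have hp0 : (0:ℝ) < p := by linarith
  have hq0 : (0:ℝ) < q := by linarith
  have hp1 : p - 1 ≠ 0 := by linarith
  have hpql : (0:ℝ) < p*q - p := by nlinarith
  have hg1 : ContDiff ℝ 1 (fun s' => G s' t) := hG.comp (contDiff_id.prodMk contDiff_const)
  have step1 : |G s t - G 0 t| ≤ a₁ * |s| ^ p / p + (a₂ * |t| ^ ((p*q-q)/p)) * |s| := by
    have := ftc_bound (fun s' => G s' t) hg1 a₁ (a₂ * |t| ^ ((p*q-q)/p)) (p - 1) ha₁
      (by positivity) (by linarith) (fun s' => hGs s' t) s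
    rwa [sub_add_cancel] at this
  have hg2 : ContDiff ℝ 1 (fun t' => G 0 t') := hG.comp (contDiff_const.prodMk contDiff_id)
  have step2 : |G 0 t - G 0 0| ≤ a₄ * |t| ^ q / q + 0 * |t| := by
    have hbd2 : ∀ t', |deriv (fun t' => G 0 t') t'| ≤ a₄ * |t'| ^ (q - 1) + 0 := by
      intro t'
      have := hGt 0 t'
      rw [abs_zero, Real.zero_rpow (ne_of_gt (div_pos hpql hq0)), mul_zero, zero_add] at this
      linarith
    have := ftc_bound (fun t' => G 0 t') hg2 a₄ 0 (q - 1) ha₄ le_rfl (by linarith) hbd2 t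
    rwa [sub_add_cancel] at this
  have hconj : p.HolderConjugate (p / (p - 1)) := (Real.holderConjugate_iff_eq_conjExponent hp).mpr rfl
  have young : |s| * |t| ^ ((p*q-q)/p) ≤ |s| ^ p / p + (p - 1)/p * |t| ^ q := by
    have h := Real.young_inequality_of_nonneg (abs_nonneg s)
      (by positivity : (0:ℝ) ≤ |t| ^ ((p*q-q)/p)) hconj
    have e1 : (|t| ^ ((p*q-q)/p)) ^ (p/(p-1)) = |t| ^ q := by
      rw [← Real.rpow_mul (abs_nonneg t)]
      congr 1
      field_simp
    rw [e1] at h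
    have e2 : |t| ^ q / (p/(p-1)) = (p - 1)/p * |t| ^ q := by
      field_simp
    linarith [h, e2.le, e2.ge]
  have hy2 : a₂ * (|t| ^ ((p*q-q)/p) * |s|) ≤ a₂ * (|s| ^ p / p + (p - 1)/p * |t| ^ q) := by
    apply mul_le_mul_of_nonneg_left _ ha₂
    rw [mul_comm]; exact young
  have habs1 : G s t - G 0 t ≤ a₁ * |s| ^ p / p + (a₂ * |t| ^ ((p*q-q)/p)) * |s| :=
    (le_abs_self _).trans step1
  have habs2 : G 0 t - G 0 0 ≤ a₄ * |t| ^ q / q + 0 * |t| := (le_abs_self _).trans step2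
  have habs3 : G 0 0 ≤ |G 0 0| := le_abs_self _
  have efin : |G 0 0| + (a₁ + a₂)/p * |s|^p + ((p*q-q)/p * a₂ + a₄)/q * |t|^q
      = |G 0 0| + a₁ * |s| ^ p / p + a₂ * (|s| ^ p / p + (p - 1)/p * |t| ^ q)
        + a₄ * |t| ^ q / q := by
    field_simp
    ring
  rw [efin]
  have := mul_assoc a₂ (|t| ^ ((p*q-q)/p)) |s|
  linarith

lemma rpow_K_eq (a b c l : ℝ) (ha : 0 ≤ a) (hb : 0 < b) (hc : 0 < c) (hl : 0 < l) :
    (a ^ (1/l) / (b ^ (1/l) * c ^ (1/l))) ^ l = a / (b * c) := by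
  rw [← Real.mul_rpow hb.le hc.le, ← Real.div_rpow ha (by positivity),
    ← Real.rpow_mul (div_nonneg ha (by positivity)), one_div, inv_mul_cancel₀ hl.ne',
    Real.rpow_one]

lemma embed_bound {V : Type*} [Fintype V] [Nonempty V] (μ h : V → ℝ)
    (hμ : ∀ x, 0 < μ x) (hh : ∀ x, 0 < h x) (l : ℝ) (hl : 0 < l)
    (g u : V → ℝ) (hg : ∀ x, 0 ≤ g x) :
    ∑ x, μ x * |u x| ^ l ≤
      (∑ x, μ x) / ((univ.inf' univ_nonempty μ) * (univ.inf' univ_nonempty h))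
        * (∑ x, μ x * (g x ^ l + h x * |u x| ^ l)) := by
  obtain ⟨x₀, -, hx₀⟩ := Finset.exists_max_image univ (fun x => |u x|) univ_nonempty
  set μm := univ.inf' univ_nonempty μ with hμm
  set hm := univ.inf' univ_nonempty h with hhm
  have hμm0 : 0 < μm := by
    obtain ⟨x, -, hx⟩ := Finset.exists_mem_eq_inf' univ_nonempty μ
    rw [hμm, hx]; exact hμ x
  have hhm0 : 0 < hm := by
    obtain ⟨x, -, hx⟩ := Finset.exists_mem_eq_inf' univ_nonempty h
    rw [hhm, hx]; exact hh x
  have h1 : ∑ x, μ x * |u x| ^ l ≤ (∑ x, μ x) * |u x₀| ^ l := by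
    rw [Finset.sum_mul]
    refine Finset.sum_le_sum fun x _ => mul_le_mul_of_nonneg_left ?_ (hμ x).le
    exact Real.rpow_le_rpow (abs_nonneg _) (hx₀ x (mem_univ x)) hl.le
  have h2 : μm * hm * |u x₀| ^ l ≤ ∑ x, μ x * (g x ^ l + h x * |u x| ^ l) := by
    have e1 : μm * hm * |u x₀| ^ l = μm * (hm * |u x₀| ^ l) := by ring
    have h21 : μm * (hm * |u x₀| ^ l) ≤ μ x₀ * (h x₀ * |u x₀| ^ l) := by
      refine mul_le_mul (Finset.inf'_le _ (mem_univ x₀)) ?_ (by positivity) (hμ x₀).le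
      exact mul_le_mul_of_nonneg_right (Finset.inf'_le _ (mem_univ x₀))
        (Real.rpow_nonneg (abs_nonneg _) l)
    have h22 : μ x₀ * (h x₀ * |u x₀| ^ l) ≤ μ x₀ * (g x₀ ^ l + h x₀ * |u x₀| ^ l) := by
      refine mul_le_mul_of_nonneg_left ?_ (hμ x₀).le
      exact le_add_of_nonneg_left (Real.rpow_nonneg (hg x₀) l)
    have h23 : μ x₀ * (g x₀ ^ l + h x₀ * |u x₀| ^ l)
        ≤ ∑ x, μ x * (g x ^ l + h x * |u x| ^ l) := by
      refine Finset.single_le_sum (f := fun x => μ x * (g x ^ l + h x * |u x| ^ l))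
        (fun x _ => ?_) (mem_univ x₀)
      have a1 := Real.rpow_nonneg (hg x) l
      have a2 := Real.rpow_nonneg (abs_nonneg (u x)) l
      have a3 := (hh x).le
      have a4 := (hμ x).le
      exact mul_nonneg a4 (add_nonneg a1 (mul_nonneg a3 a2))
    linarith [e1.le, e1.ge]
  calc ∑ x, μ x * |u x| ^ l ≤ (∑ x, μ x) * |u x₀| ^ l := h1
    _ = (∑ x, μ x) / (μm * hm) * (μm * hm * |u x₀| ^ l) := by
        field_simp
    _ ≤ _ := by
        refine mul_le_mul_of_nonneg_left h2 ?_
        have : 0 < ∑ x, μ x := Finset.sum_pos (fun x _ => hμ x) univ_nonempty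
        positivity

/-- Coercivity (Lemma 3.1): under (A) and (H₁), the energy functional
`φ_V(u,v) = (1/p)‖u‖^p + (1/q)‖v‖^q − ∫_V F(x,u,v) dμ` is coercive on
`X = W^{m₁,p}(V) × W^{m₂,q}(V)`. -/
theorem energy_coercive {V : Type*} [Fintype V] [Nonempty V] (μ : V → ℝ) (E : V → V → Prop)
    [DecidableRel E] (w : V → V → ℝ)
    (hμ : ∀ x, 0 < μ x)
    (hE : ∀ x y, E x y ↔ E y x)
    (hw : ∀ x y, E x y → 0 < w x y)
    (hws : ∀ x y, w x y = w y x)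
    (p q : ℝ) (hp : 1 < p) (hq : 1 < q)
    (m₁ m₂ : ℕ) (hm₁ : 1 ≤ m₁) (hm₂ : 1 ≤ m₂)
    (h₁ h₂ : V → ℝ) (hh₁ : ∀ x, 0 < h₁ x) (hh₂ : ∀ x, 0 < h₂ x)
    -- (A): F(x,·,·) is C¹
    (F : V → ℝ → ℝ → ℝ)
    (hF : ∀ x, ContDiff ℝ 1 (fun st : ℝ × ℝ => F x st.1 st.2))
    -- (H₁)
    (f₁ f₂ f₃ f₄ : V → ℝ)
    (hf₁ : ∀ x, 0 ≤ f₁ x) (hf₂ : ∀ x, 0 ≤ f₂ x) (hf₃ : ∀ x, 0 ≤ f₃ x) (hf₄ : ∀ x, 0 ≤ f₄ x)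
    (h0 : ∑ x, μ x * F x 0 0 = 0)
    (hFs : ∀ x s t, |deriv (fun s' => F x s' t) s| ≤
      f₁ x * |s| ^ (p - 1) + f₂ x * |t| ^ ((p * q - q) / p))
    (hFt : ∀ x s t, |deriv (fun t' => F x s t') t| ≤
      f₃ x * |s| ^ ((p * q - p) / q) + f₄ x * |t| ^ (q - 1))
    (hKq : (p * q - q) / p * (univ.sup' univ_nonempty fun x => |f₂ x|) +
        (univ.sup' univ_nonempty fun x => |f₄ x|) <
        1 / ((∑ x, μ x) ^ (1 / q) /
          ((univ.inf' univ_nonempty μ) ^ (1 / q) * (univ.inf' univ_nonempty h₂) ^ (1 / q))) ^ q)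
    (hKp : (univ.sup' univ_nonempty fun x => |f₁ x|) +
        (univ.sup' univ_nonempty fun x => |f₂ x|) <
        1 / ((∑ x, μ x) ^ (1 / p) /
          ((univ.inf' univ_nonempty μ) ^ (1 / p) * (univ.inf' univ_nonempty h₁) ^ (1 / p))) ^ p) :
    ∀ M : ℝ, ∃ R : ℝ, ∀ u v : V → ℝ,
      R ≤ sobNorm μ E w m₁ p h₁ u + sobNorm μ E w m₂ q h₂ v →
      M ≤ (1 / p) * (∑ x, μ x * ((gradLenM μ E w m₁ u x) ^ p + h₁ x * |u x| ^ p)) +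
          (1 / q) * (∑ x, μ x * ((gradLenM μ E w m₂ v x) ^ q + h₂ x * |v x| ^ q)) -
          ∑ x, μ x * F x (u x) (v x) := by
  intro M
  have hp0 : (0:ℝ) < p := by linarith
  have hq0 : (0:ℝ) < q := by linarith
  set μm := univ.inf' univ_nonempty μ with hμmdef
  set hm₁' := univ.inf' univ_nonempty h₁ with hm₁def
  set hm₂' := univ.inf' univ_nonempty h₂ with hm₂def
  set A₁ := univ.sup' univ_nonempty fun x => |f₁ x| with hA₁def
  set A₂ := univ.sup' univ_nonempty fun x => |f₂ x| with hA₂def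
  set A₄ := univ.sup' univ_nonempty fun x => |f₄ x| with hA₄def
  have hμm0 : 0 < μm := by
    obtain ⟨x, -, hx⟩ := Finset.exists_mem_eq_inf' univ_nonempty μ
    rw [hμmdef, hx]; exact hμ x
  have hhm₁0 : 0 < hm₁' := by
    obtain ⟨x, -, hx⟩ := Finset.exists_mem_eq_inf' univ_nonempty h₁
    rw [hm₁def, hx]; exact hh₁ x
  have hhm₂0 : 0 < hm₂' := by
    obtain ⟨x, -, hx⟩ := Finset.exists_mem_eq_inf' univ_nonempty h₂
    rw [hm₂def, hx]; exact hh₂ x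
  have hsμ : 0 < ∑ x, μ x := Finset.sum_pos (fun x _ => hμ x) univ_nonempty
  rw [rpow_K_eq _ _ _ _ hsμ.le hμm0 hhm₁0 hp0] at hKp
  rw [rpow_K_eq _ _ _ _ hsμ.le hμm0 hhm₂0 hq0] at hKq
  set Kp := (∑ x, μ x) / (μm * hm₁') with hKpdef
  set Kq := (∑ x, μ x) / (μm * hm₂') with hKqdef
  have hKp0 : 0 < Kp := by rw [hKpdef]; positivity
  have hKq0 : 0 < Kq := by rw [hKqdef]; positivity
  have hA1 : ∀ x, f₁ x ≤ A₁ := fun x =>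
    (le_abs_self _).trans (Finset.le_sup' (fun x => |f₁ x|) (mem_univ x))
  have hA2 : ∀ x, f₂ x ≤ A₂ := fun x =>
    (le_abs_self _).trans (Finset.le_sup' (fun x => |f₂ x|) (mem_univ x))
  have hA4 : ∀ x, f₄ x ≤ A₄ := fun x =>
    (le_abs_self _).trans (Finset.le_sup' (fun x => |f₄ x|) (mem_univ x))
  have hA₁0 : 0 ≤ A₁ := le_trans (hf₁ (Classical.arbitrary V)) (hA1 _)
  have hA₂0 : 0 ≤ A₂ := le_trans (hf₂ (Classical.arbitrary V)) (hA2 _)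
  have hA₄0 : 0 ≤ A₄ := le_trans (hf₄ (Classical.arbitrary V)) (hA4 _)
  have hpqq0 : (0:ℝ) < p * q - q := by nlinarith
  have hpqq : (0:ℝ) ≤ (p * q - q) / p := by positivity
  set B := (p * q - q) / p * A₂ + A₄ with hBdef
  have hB0 : 0 ≤ B := by rw [hBdef]; positivity
  have hmulp : (A₁ + A₂) * Kp < 1 := (lt_div_iff₀ hKp0).mp hKp
  have hmulq : B * Kq < 1 := (lt_div_iff₀ hKq0).mp hKq
  set εu := (1/p) * (1 - (A₁ + A₂) * Kp) with hεudef
  set εv := (1/q) * (1 - B * Kq) with hεvdef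
  have hεu0 : 0 < εu := by rw [hεudef]; have : 0 < 1 - (A₁ + A₂) * Kp := by linarith
                           positivity
  have hεv0 : 0 < εv := by rw [hεvdef]; have : 0 < 1 - B * Kq := by linarith
                           positivity
  set ε := min εu εv with hεdef
  have hε : 0 < ε := lt_min hεu0 hεv0
  set C := ∑ x, μ x * |F x 0 0| with hCdef
  refine ⟨2 * max 1 ((M + C)/ε), fun u v hR => ?_⟩
  set Nu := ∑ x, μ x * ((gradLenM μ E w m₁ u x) ^ p + h₁ x * |u x| ^ p) with hNudef
  set Nv := ∑ x, μ x * ((gradLenM μ E w m₂ v x) ^ q + h₂ x * |v x| ^ q) with hNvdef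
  have hNu0 : 0 ≤ Nu := Finset.sum_nonneg fun x _ =>
    mul_nonneg (hμ x).le (add_nonneg (Real.rpow_nonneg (gradLenM_nonneg μ E w m₁ u x) p)
      (mul_nonneg (hh₁ x).le (Real.rpow_nonneg (abs_nonneg _) p)))
  have hNv0 : 0 ≤ Nv := Finset.sum_nonneg fun x _ =>
    mul_nonneg (hμ x).le (add_nonneg (Real.rpow_nonneg (gradLenM_nonneg μ E w m₂ v x) q)
      (mul_nonneg (hh₂ x).le (Real.rpow_nonneg (abs_nonneg _) q)))
  -- bound on ∑ μ F
  have hFsum : ∑ x, μ x * F x (u x) (v x) ≤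
      C + (A₁ + A₂)/p * (∑ x, μ x * |u x| ^ p) + B/q * (∑ x, μ x * |v x| ^ q) := by
    have hpt : ∀ x, μ x * F x (u x) (v x) ≤
        μ x * |F x 0 0| + (A₁ + A₂)/p * (μ x * |u x| ^ p) + B/q * (μ x * |v x| ^ q) := by
      intro x
      have h1 := F_pointwise_bound p q hp hq (F x) (hF x) (f₁ x) (f₂ x) (f₃ x) (f₄ x)
        (hf₁ x) (hf₂ x) (hf₃ x) (hf₄ x) (hFs x) (hFt x) (u x) (v x)
      have c1 : (f₁ x + f₂ x)/p ≤ (A₁ + A₂)/p := by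
        gcongr
        · exact hA1 x
        · exact hA2 x
      have c2 : ((p*q-q)/p * f₂ x + f₄ x)/q ≤ B/q := by
        rw [hBdef]
        gcongr
        · exact hA2 x
        · exact hA4 x
      have step : μ x * F x (u x) (v x) ≤
          μ x * (|F x 0 0| + (f₁ x + f₂ x)/p * |u x| ^ p
            + ((p*q-q)/p * f₂ x + f₄ x)/q * |v x| ^ q) :=
        mul_le_mul_of_nonneg_left h1 (hμ x).le
      have expand : μ x * (|F x 0 0| + (f₁ x + f₂ x)/p * |u x| ^ p
            + ((p*q-q)/p * f₂ x + f₄ x)/q * |v x| ^ q)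
          = μ x * |F x 0 0| + (f₁ x + f₂ x)/p * (μ x * |u x| ^ p)
            + ((p*q-q)/p * f₂ x + f₄ x)/q * (μ x * |v x| ^ q) := by ring
      have t1 : (f₁ x + f₂ x)/p * (μ x * |u x| ^ p) ≤ (A₁ + A₂)/p * (μ x * |u x| ^ p) := by
        refine mul_le_mul_of_nonneg_right c1 ?_
        exact mul_nonneg (hμ x).le (Real.rpow_nonneg (abs_nonneg _) p)
      have t2 : ((p*q-q)/p * f₂ x + f₄ x)/q * (μ x * |v x| ^ q)
          ≤ B/q * (μ x * |v x| ^ q) := by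
        refine mul_le_mul_of_nonneg_right c2 ?_
        exact mul_nonneg (hμ x).le (Real.rpow_nonneg (abs_nonneg _) q)
      linarith [step, expand.le, expand.ge]
    calc ∑ x, μ x * F x (u x) (v x)
        ≤ ∑ x, (μ x * |F x 0 0| + (A₁ + A₂)/p * (μ x * |u x| ^ p)
            + B/q * (μ x * |v x| ^ q)) := Finset.sum_le_sum fun x _ => hpt x
      _ = C + (A₁ + A₂)/p * (∑ x, μ x * |u x| ^ p) + B/q * (∑ x, μ x * |v x| ^ q) := by
          rw [Finset.sum_add_distrib, Finset.sum_add_distrib, ← Finset.mul_sum,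
            ← Finset.mul_sum]
  -- Sobolev embeddings
  have hembu : ∑ x, μ x * |u x| ^ p ≤ Kp * Nu := by
    have := embed_bound μ h₁ hμ hh₁ p hp0 (gradLenM μ E w m₁ u) u
      (gradLenM_nonneg μ E w m₁ u)
    exact this
  have hembv : ∑ x, μ x * |v x| ^ q ≤ Kq * Nv := by
    have := embed_bound μ h₂ hμ hh₂ q hq0 (gradLenM μ E w m₂ v) v
      (gradLenM_nonneg μ E w m₂ v)
    exact this
  -- lower bound on the functional
  have hlow : ε * (Nu + Nv) - C ≤ (1/p) * Nu + (1/q) * Nv - ∑ x, μ x * F x (u x) (v x) := by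
    have t1 : (A₁ + A₂)/p * (∑ x, μ x * |u x| ^ p) ≤ (A₁ + A₂)/p * (Kp * Nu) := by
      refine mul_le_mul_of_nonneg_left hembu ?_
      positivity
    have t2 : B/q * (∑ x, μ x * |v x| ^ q) ≤ B/q * (Kq * Nv) := by
      refine mul_le_mul_of_nonneg_left hembv ?_
      positivity
    have e1 : (1/p) * Nu - (A₁ + A₂)/p * (Kp * Nu) = εu * Nu := by rw [hεudef]; ring
    have e2 : (1/q) * Nv - B/q * (Kq * Nv) = εv * Nv := by rw [hεvdef]; ring
    have m1 : ε * Nu ≤ εu * Nu := mul_le_mul_of_nonneg_right (min_le_left _ _) hNu0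
    have m2 : ε * Nv ≤ εv * Nv := mul_le_mul_of_nonneg_right (min_le_right _ _) hNv0
    have edist : ε * (Nu + Nv) = ε * Nu + ε * Nv := by ring
    linarith [hFsum, t1, t2, e1.le, e1.ge, e2.le, e2.ge, m1, m2, edist.le, edist.ge]
  -- relating sobNorm to Nu, Nv
  have hSu : sobNorm μ E w m₁ p h₁ u = Nu ^ (1/p) := by rw [sobNorm, ← hNudef]
  have hSv : sobNorm μ E w m₂ q h₂ v = Nv ^ (1/q) := by rw [sobNorm, ← hNvdef]
  have hSu0 : 0 ≤ sobNorm μ E w m₁ p h₁ u := by rw [hSu]; exact Real.rpow_nonneg hNu0 _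
  have hSv0 : 0 ≤ sobNorm μ E w m₂ q h₂ v := by rw [hSv]; exact Real.rpow_nonneg hNv0 _
  have hNuSu : (sobNorm μ E w m₁ p h₁ u) ^ p = Nu := by
    rw [hSu, ← Real.rpow_mul hNu0, one_div, inv_mul_cancel₀ hp0.ne', Real.rpow_one]
  have hNvSv : (sobNorm μ E w m₂ q h₂ v) ^ q = Nv := by
    rw [hSv, ← Real.rpow_mul hNv0, one_div, inv_mul_cancel₀ hq0.ne', Real.rpow_one]
  -- from the radius condition, Nu + Nv is large
  have hbig : (M + C)/ε ≤ Nu + Nv := by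
    have hD1 : (1:ℝ) ≤ max 1 ((M + C)/ε) := le_max_left _ _
    have hD2 : (M + C)/ε ≤ max 1 ((M + C)/ε) := le_max_right _ _
    have hcases : max 1 ((M + C)/ε) ≤ sobNorm μ E w m₁ p h₁ u ∨
        max 1 ((M + C)/ε) ≤ sobNorm μ E w m₂ q h₂ v := by
      by_contra hcon
      push_neg at hcon
      linarith [hcon.1, hcon.2, hR]
    rcases hcases with hc | hc
    · have h1le : 1 ≤ sobNorm μ E w m₁ p h₁ u := le_trans hD1 hc
      have : sobNorm μ E w m₁ p h₁ u ≤ Nu := by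
        calc sobNorm μ E w m₁ p h₁ u = (sobNorm μ E w m₁ p h₁ u) ^ (1:ℝ) :=
              (Real.rpow_one _).symm
          _ ≤ (sobNorm μ E w m₁ p h₁ u) ^ p :=
              Real.rpow_le_rpow_of_exponent_le h1le hp.le
          _ = Nu := hNuSu
      linarith [hD2, hNv0, hc]
    · have h1le : 1 ≤ sobNorm μ E w m₂ q h₂ v := le_trans hD1 hc
      have : sobNorm μ E w m₂ q h₂ v ≤ Nv := by
        calc sobNorm μ E w m₂ q h₂ v = (sobNorm μ E w m₂ q h₂ v) ^ (1:ℝ) :=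
              (Real.rpow_one _).symm
          _ ≤ (sobNorm μ E w m₂ q h₂ v) ^ q :=
              Real.rpow_le_rpow_of_exponent_le h1le hq.le
          _ = Nv := hNvSv
      linarith [hD2, hNu0, hc]
  have hfin : M + C ≤ ε * (Nu + Nv) := by
    have h := mul_le_mul_of_nonneg_left hbig hε.le
    rwa [mul_comm ε ((M + C)/ε), div_mul_cancel₀ _ hε.ne'] at h
  linarith [hlow, hfin]
end

section
/- (Divergence to −∞ along constants) Suppose (H₂)-first part holds: limsup_{R→∞} inf_{|(a,b)|=R} (∫_V F(x,a,b)dμ)/(|a|^p + |b|^q) > max{(1/p)∫_V h₁dμ, (1/q)∫_V h₂dμ}. Then there exists a sequence R_n → +∞ with sup_{(a,b)∈ℝ², |(a,b)|=R_n} φ_V(a,b) → −∞. -/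
open Finset Filter

lemma sphere_lower_aux (p q R : ℝ) (hp : 1 ≤ p) (hq : 1 ≤ q)
    (hR : Real.sqrt 2 ≤ R) (a b : ℝ) (hab : Real.sqrt (a ^ 2 + b ^ 2) = R) :
    R / Real.sqrt 2 ≤ |a| ^ p + |b| ^ q := by
  have h2 : (0:ℝ) < Real.sqrt 2 := by positivity
  have hR0 : 0 ≤ R := le_trans h2.le hR
  have hsq : a ^ 2 + b ^ 2 = R ^ 2 := by
    rw [← hab, Real.sq_sqrt (by positivity)]
  have key : ∀ c r : ℝ, 1 ≤ r → R ^ 2 ≤ 2 * c ^ 2 → R / Real.sqrt 2 ≤ |c| ^ r := by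
    intro c r hr hc
    have h1 : R / Real.sqrt 2 ≤ |c| := by
      have hs : Real.sqrt (R ^ 2 / 2) ≤ Real.sqrt (c ^ 2) := Real.sqrt_le_sqrt (by linarith)
      rw [Real.sqrt_sq_eq_abs] at hs
      calc R / Real.sqrt 2 = Real.sqrt (R ^ 2) / Real.sqrt 2 := by rw [Real.sqrt_sq hR0]
        _ = Real.sqrt (R ^ 2 / 2) := (Real.sqrt_div (by positivity) 2).symm
        _ ≤ |c| := hs
    have h1c : 1 ≤ |c| := by
      have hge : (1:ℝ) ≤ R / Real.sqrt 2 := by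
        rw [le_div_iff₀ h2]; simpa using hR
      linarith
    calc R / Real.sqrt 2 ≤ |c| := h1
      _ = |c| ^ (1:ℝ) := (Real.rpow_one _).symm
      _ ≤ |c| ^ r := Real.rpow_le_rpow_of_exponent_le h1c hr
  rcases le_total (b ^ 2) (a ^ 2) with h | h
  · have hk := key a p hp (by linarith)
    have hb : 0 ≤ |b| ^ q := Real.rpow_nonneg (abs_nonneg _) _
    linarith
  · have hk := key b q hq (by linarith)
    have ha : 0 ≤ |a| ^ p := Real.rpow_nonneg (abs_nonneg _) _
    linarith

/-- Divergence to −∞ along constants (Lemma 3.2): if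
`limsup_{R→∞} inf_{|(a,b)|=R} (∫_V F(x,a,b)dμ)/(|a|^p+|b|^q) >
 max{(1/p)∫_V h₁dμ, (1/q)∫_V h₂dμ}`, then there is a sequence `R_n → +∞` with
`sup_{|(a,b)|=R_n} φ_V(a,b) → −∞`, where
`φ_V(a,b) = (|a|^p/p)∫_V h₁dμ + (|b|^q/q)∫_V h₂dμ − ∫_V F(x,a,b)dμ`. -/
theorem sup_on_spheres_to_neg_infty {V : Type*} [Fintype V] (μ : V → ℝ)
    (hμ : ∀ x, 0 < μ x)
    (p q : ℝ) (hp : 1 < p) (hq : 1 < q)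
    (h₁ h₂ : V → ℝ) (hh₁ : ∀ x, 0 < h₁ x) (hh₂ : ∀ x, 0 < h₂ x)
    (F : V → ℝ → ℝ → ℝ)
    (hFc : ∀ x, Continuous (fun ab : ℝ × ℝ => F x ab.1 ab.2))
    -- (H₂), first part: the limsup of the infimum over spheres exceeds the max
    (hH₂ : ∃ α : ℝ,
      max ((1 / p) * ∑ x, μ x * h₁ x) ((1 / q) * ∑ x, μ x * h₂ x) < α ∧
      ∀ R₀ : ℝ, 0 < R₀ → ∃ R : ℝ, R₀ ≤ R ∧ ∀ a b : ℝ,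
        Real.sqrt (a ^ 2 + b ^ 2) = R →
        α * (|a| ^ p + |b| ^ q) ≤ ∑ x, μ x * F x a b) :
    ∃ Rn : ℕ → ℝ,
      Tendsto Rn atTop atTop ∧
      Tendsto (fun n => sSup {y : ℝ | ∃ a b : ℝ, Real.sqrt (a ^ 2 + b ^ 2) = Rn n ∧
          y = |a| ^ p / p * (∑ x, μ x * h₁ x) + |b| ^ q / q * (∑ x, μ x * h₂ x) -
              ∑ x, μ x * F x a b}) atTop atBot := by
  obtain ⟨α, hαmax, hRex⟩ := hH₂
  have h2 : (0:ℝ) < Real.sqrt 2 := by positivity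
  choose R hR1 hR2 using fun n : ℕ => hRex (Real.sqrt 2 + n + 1) (by positivity)
  have hRpos : ∀ n, 0 < R n := fun n =>
    lt_of_lt_of_le (by positivity) (hR1 n)
  have hRs2 : ∀ n, Real.sqrt 2 ≤ R n := fun n => by
    have h := hR1 n
    have hn : (0:ℝ) ≤ n := Nat.cast_nonneg n
    linarith
  have hRtop : Tendsto R atTop atTop := by
    refine tendsto_atTop_mono (fun n => ?_) tendsto_natCast_atTop_atTop
    have h := hR1 n
    linarith
  refine ⟨R, hRtop, ?_⟩
  set A := ∑ x, μ x * h₁ x with hA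
  set B := ∑ x, μ x * h₂ x with hB
  set δ := α - max ((1 / p) * A) ((1 / q) * B) with hδdef
  have hδ : 0 < δ := sub_pos.mpr hαmax
  have hδA : (1 / p) * A ≤ α - δ := by
    have := le_max_left ((1 / p) * A) ((1 / q) * B)
    rw [hδdef]; linarith
  have hδB : (1 / q) * B ≤ α - δ := by
    have := le_max_right ((1 / p) * A) ((1 / q) * B)
    rw [hδdef]; linarith
  have hg : Tendsto (fun n => -(δ * (R n / Real.sqrt 2))) atTop atBot := by
    have h1 : Tendsto (fun n => δ * (R n / Real.sqrt 2)) atTop atTop :=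
      (hRtop.atTop_div_const h2).const_mul_atTop hδ
    exact tendsto_neg_atTop_atBot.comp h1
  refine tendsto_atBot_mono' atTop (Eventually.of_forall fun n => ?_) hg
  apply csSup_le
  · refine ⟨_, R n, 0, ?_, rfl⟩
    rw [show ((0:ℝ)) ^ 2 = 0 by norm_num, add_zero, Real.sqrt_sq (hRpos n).le]
  · rintro y ⟨a, b, hab, rfl⟩
    have hap : 0 ≤ |a| ^ p := Real.rpow_nonneg (abs_nonneg _) _
    have hbq : 0 ≤ |b| ^ q := Real.rpow_nonneg (abs_nonneg _) _
    have hF := hR2 n a b hab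
    have hsphere : R n / Real.sqrt 2 ≤ |a| ^ p + |b| ^ q :=
      sphere_lower_aux p q (R n) hp.le hq.le (hRs2 n) a b hab
    have h1 : |a| ^ p / p * A ≤ (α - δ) * |a| ^ p := by
      calc |a| ^ p / p * A = ((1 / p) * A) * |a| ^ p := by ring
        _ ≤ (α - δ) * |a| ^ p := mul_le_mul_of_nonneg_right hδA hap
    have h2' : |b| ^ q / q * B ≤ (α - δ) * |b| ^ q := by
      calc |b| ^ q / q * B = ((1 / q) * B) * |b| ^ q := by ring
        _ ≤ (α - δ) * |b| ^ q := mul_le_mul_of_nonneg_right hδB hbq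
    have h3 : |a| ^ p / p * A + |b| ^ q / q * B - ∑ x, μ x * F x a b ≤
        (α - δ) * |a| ^ p + (α - δ) * |b| ^ q - α * (|a| ^ p + |b| ^ q) := by
      linarith
    have h4 : (α - δ) * |a| ^ p + (α - δ) * |b| ^ q - α * (|a| ^ p + |b| ^ q) =
        -(δ * (|a| ^ p + |b| ^ q)) := by ring
    have hmul : δ * (R n / Real.sqrt 2) ≤ δ * (|a| ^ p + |b| ^ q) :=
      mul_le_mul_of_nonneg_left hsphere hδ.le
    linarith
end

section
/- (Coercivity on the locally finite graph domain) Under (A)' and (H₃), the functional φ_Ω(u,v) = (1/p)∫_{Ω∪∂Ω}|∇^{m₁}u|^p dμ + (1/q)∫_{Ω∪∂Ω}|∇^{m₂}v|^q dμ − ∫_Ω F(x,u,v)dμ is coercive on W = W₀^{m₁,p}(Ω) × W₀^{m₂,q}(Ω). -/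
open Finset

/-- Comparison FTC: if `|g'| ≤ H'` on `[0,c]`, then `|g c - g 0| ≤ H c - H 0`. -/
private lemma abs_image_le_aux {g H : ℝ → ℝ} {c : ℝ} (hc : 0 ≤ c)
    (hg : Differentiable ℝ g) (hH : Differentiable ℝ H)
    (hbound : ∀ r ∈ Set.Icc (0 : ℝ) c, |deriv g r| ≤ deriv H r) :
    |g c - g 0| ≤ H c - H 0 := by
  have hmono : ∀ e : ℝ, e = 1 ∨ e = -1 →
      MonotoneOn (fun r => H r + e * g r) (Set.Icc 0 c) := by
    intro e he
    apply monotoneOn_of_deriv_nonneg (convex_Icc 0 c)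
      ((hH.continuous.add ((continuous_const.mul hg.continuous))).continuousOn)
      ((hH.add (hg.const_mul e)).differentiableOn)
    intro x hx
    have hx' : x ∈ Set.Icc (0 : ℝ) c := interior_subset hx
    have hd : deriv (fun r => H r + e * g r) x = deriv H x + e * deriv g x := by
      rw [deriv_fun_add (hH x) ((hg x).const_mul e), deriv_const_mul e (hg x)]
    show 0 ≤ deriv (fun r => H r + e * g r) x
    rw [hd]
    have h1 := hbound x hx'
    have h2 := le_abs_self (deriv g x)
    have h3 := neg_abs_le (deriv g x)
    rcases he with he | he <;> rw [he] <;> linarith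
  have h0mem : (0 : ℝ) ∈ Set.Icc (0 : ℝ) c := ⟨le_refl _, hc⟩
  have hcmem : c ∈ Set.Icc (0 : ℝ) c := ⟨hc, le_refl _⟩
  have hA := hmono 1 (Or.inl rfl) h0mem hcmem hc
  have hB := hmono (-1) (Or.inr rfl) h0mem hcmem hc
  simp only [one_mul, neg_one_mul] at hA hB
  rw [abs_sub_le_iff]
  constructor <;> linarith

/-- One-variable growth bound for nonnegative endpoint. -/
private lemma growth_bound0 {g : ℝ → ℝ} (hg : Differentiable ℝ g) {A B p : ℝ}
    (hp : 1 < p) {s : ℝ} (hs : 0 ≤ s)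
    (hbound : ∀ r ∈ Set.Icc (0 : ℝ) s, |deriv g r| ≤ A * r ^ (p - 1) + B) :
    |g s - g 0| ≤ A * s ^ p / p + B * s := by
  have hp0 : (p : ℝ) ≠ 0 := by positivity
  set H : ℝ → ℝ := fun r => A * r ^ p / p + B * r with hHdef
  have hH : ∀ r : ℝ, HasDerivAt H (A * r ^ (p - 1) + B) r := by
    intro r
    have h1 : HasDerivAt (fun x : ℝ => x ^ p) (p * r ^ (p - 1)) r :=
      Real.hasDerivAt_rpow_const (Or.inr hp.le)
    have h2 := ((h1.const_mul A).div_const p).add ((hasDerivAt_id r).const_mul B)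
    have h3 : A * (p * r ^ (p - 1)) / p + B * 1 = A * r ^ (p - 1) + B := by
      rw [mul_one]
      field_simp
    exact h3 ▸ h2
  have hHd : Differentiable ℝ H := fun r => (hH r).differentiableAt
  have key := abs_image_le_aux hs hg hHd (fun r hr => by
    rw [(hH r).deriv]; exact hbound r hr)
  have hH0 : H 0 = 0 := by
    simp [hHdef, Real.zero_rpow hp0]
  rw [hH0, sub_zero] at key
  exact key

/-- One-variable growth bound: `|g'(r)| ≤ A|r|^{p-1} + B` implies
`|g(s) - g(0)| ≤ A|s|^p/p + B|s|`. -/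
private lemma growth_bound {g : ℝ → ℝ} (hg : Differentiable ℝ g) {A B p : ℝ}
    (hp : 1 < p) (hbound : ∀ r : ℝ, |deriv g r| ≤ A * |r| ^ (p - 1) + B) (s : ℝ) :
    |g s - g 0| ≤ A * |s| ^ p / p + B * |s| := by
  rcases le_or_gt 0 s with hs | hs
  · rw [abs_of_nonneg hs]
    exact growth_bound0 hg hp hs (fun r hr => by
      have h := hbound r
      rwa [abs_of_nonneg hr.1] at h)
  · have hs' : 0 ≤ -s := by linarith
    rw [abs_of_neg hs]
    have key := growth_bound0 (g := fun r => g (-r)) (hg.comp differentiable_neg) hp hs'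
      (fun r hr => by
        rw [deriv_comp_neg, abs_neg]
        have h := hbound (-r)
        rwa [abs_neg, abs_of_nonneg hr.1] at h)
    simpa using key

set_option maxHeartbeats 2000000 in
/-- Coercivity on the locally finite graph domain (Lemma 4.1): under (A)' and
(H₃), the functional
`φ_Ω(u,v) = (1/p)∫_{Ω∪∂Ω}|∇^{m₁}u|^p dμ + (1/q)∫_{Ω∪∂Ω}|∇^{m₂}v|^q dμ − ∫_Ω F(x,u,v)dμ`
is coercive on `W = W₀^{m₁,p}(Ω) × W₀^{m₂,q}(Ω)`. Here `G₁ u` and `G₂ v` denote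
the gradient lengths `|∇^{m₁}u|`, `|∇^{m₂}v|` on `S = Ω ∪ ∂Ω`, `N₁, N₂` are the
corresponding Sobolev norms, and `C₁, C₂` the Sobolev embedding constants into
`L^p(Ω)` and `L^q(Ω)`. -/
theorem dirichlet_energy_coercive {V : Type*} [DecidableEq V] (μ : V → ℝ)
    (Ω S : Finset V) (hΩS : Ω ⊆ S) (hΩ : Ω.Nonempty)
    (hμ : ∀ x, 0 < μ x)
    (p q : ℝ) (hp : 1 < p) (hq : 1 < q)
    (G₁ G₂ : (V → ℝ) → V → ℝ)
    (hG₁ : ∀ u x, 0 ≤ G₁ u x) (hG₂ : ∀ v x, 0 ≤ G₂ v x)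
    (N₁ N₂ : (V → ℝ) → ℝ)
    (hN₁ : ∀ u, N₁ u = (∑ x ∈ S, μ x * (G₁ u x) ^ p) ^ (1 / p))
    (hN₂ : ∀ v, N₂ v = (∑ x ∈ S, μ x * (G₂ v x) ^ q) ^ (1 / q))
    (C₁ C₂ : ℝ) (hC₁ : 0 < C₁) (hC₂ : 0 < C₂)
    (hemb₁ : ∀ u : V → ℝ, (∑ x ∈ Ω, μ x * |u x| ^ p) ^ (1 / p) ≤ C₁ * N₁ u)
    (hemb₂ : ∀ v : V → ℝ, (∑ x ∈ Ω, μ x * |v x| ^ q) ^ (1 / q) ≤ C₂ * N₂ v)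
    -- (A)': F(x,·,·) is C¹
    (F : V → ℝ → ℝ → ℝ)
    (hF : ∀ x, ContDiff ℝ 1 (fun st : ℝ × ℝ => F x st.1 st.2))
    -- (H₃)
    (f₁ f₂ f₃ f₄ : V → ℝ)
    (hf₁ : ∀ x, 0 ≤ f₁ x) (hf₂ : ∀ x, 0 ≤ f₂ x) (hf₃ : ∀ x, 0 ≤ f₃ x) (hf₄ : ∀ x, 0 ≤ f₄ x)
    (h0 : ∑ x ∈ Ω, μ x * F x 0 0 = 0)
    (hFs : ∀ x ∈ Ω, ∀ s t : ℝ, |deriv (fun s' => F x s' t) s| ≤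
      f₁ x * |s| ^ (p - 1) + f₂ x * |t| ^ ((p * q - q) / p))
    (hFt : ∀ x ∈ Ω, ∀ s t : ℝ, |deriv (fun t' => F x s t') t| ≤
      f₃ x * |s| ^ ((p * q - p) / q) + f₄ x * |t| ^ (q - 1))
    (hc₂ : (p * q - q) / p * (Ω.sup' hΩ fun x => |f₂ x|) + (Ω.sup' hΩ fun x => |f₄ x|) <
      1 / C₂ ^ q)
    (hc₁ : (Ω.sup' hΩ fun x => |f₁ x|) + (Ω.sup' hΩ fun x => |f₂ x|) < 1 / C₁ ^ p) :
    ∀ M : ℝ, ∃ R : ℝ, ∀ u v : V → ℝ,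
      (∀ x ∉ Ω, u x = 0) → (∀ x ∉ Ω, v x = 0) →
      R ≤ N₁ u + N₂ v →
      M ≤ (1 / p) * (∑ x ∈ S, μ x * (G₁ u x) ^ p) +
          (1 / q) * (∑ x ∈ S, μ x * (G₂ v x) ^ q) -
          ∑ x ∈ Ω, μ x * F x (u x) (v x) := by
  intro M
  have hp0 : (0 : ℝ) < p := lt_trans one_pos hp
  have hq0 : (0 : ℝ) < q := lt_trans one_pos hq
  have hpne : p ≠ 0 := hp0.ne'
  have hqne : q ≠ 0 := hq0.ne'
  set a₁ := Ω.sup' hΩ fun x => |f₁ x| with ha₁def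
  set a₂ := Ω.sup' hΩ fun x => |f₂ x| with ha₂def
  set a₄ := Ω.sup' hΩ fun x => |f₄ x| with ha₄def
  obtain ⟨x₀, hx₀⟩ := id hΩ
  have ha₁ : 0 ≤ a₁ := le_trans (abs_nonneg (f₁ x₀)) (Finset.le_sup' (fun x => |f₁ x|) hx₀)
  have ha₂ : 0 ≤ a₂ := le_trans (abs_nonneg (f₂ x₀)) (Finset.le_sup' (fun x => |f₂ x|) hx₀)
  have ha₄ : 0 ≤ a₄ := le_trans (abs_nonneg (f₄ x₀)) (Finset.le_sup' (fun x => |f₄ x|) hx₀)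
  set A := a₁ + a₂ with hAdef
  set B := (p * q - q) / p * a₂ + a₄ with hBdef
  have hApos : 0 ≤ A := by positivity
  have hpq : 0 ≤ (p * q - q) / p := by
    apply div_nonneg _ hp0.le
    nlinarith
  have hBpos : 0 ≤ B := by positivity
  have hC₁p : (0 : ℝ) < C₁ ^ p := Real.rpow_pos_of_pos hC₁ p
  have hC₂q : (0 : ℝ) < C₂ ^ q := Real.rpow_pos_of_pos hC₂ q
  have hA1 : A * C₁ ^ p < 1 := by
    have h := (lt_div_iff₀ hC₁p).mp hc₁
    linarith
  have hB1 : B * C₂ ^ q < 1 := by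
    have h := (lt_div_iff₀ hC₂q).mp hc₂
    linarith
  set K₁ := (1 - A * C₁ ^ p) / p with hK₁def
  set K₂ := (1 - B * C₂ ^ q) / q with hK₂def
  have hK₁ : 0 < K₁ := by apply div_pos <;> linarith
  have hK₂ : 0 < K₂ := by apply div_pos <;> linarith
  set ε := min K₁ K₂ with hεdef
  have hε : 0 < ε := lt_min hK₁ hK₂
  refine ⟨max 2 (2 * (|M| + 1) / ε), fun u v hu hv hR => ?_⟩
  set S₁ := ∑ x ∈ S, μ x * G₁ u x ^ p with hS₁def
  set S₂ := ∑ x ∈ S, μ x * G₂ v x ^ q with hS₂def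
  have hS₁nn : 0 ≤ S₁ :=
    Finset.sum_nonneg fun x _ => mul_nonneg (hμ x).le (Real.rpow_nonneg (hG₁ u x) p)
  have hS₂nn : 0 ≤ S₂ :=
    Finset.sum_nonneg fun x _ => mul_nonneg (hμ x).le (Real.rpow_nonneg (hG₂ v x) q)
  have hN₁nn : 0 ≤ N₁ u := by rw [hN₁]; exact Real.rpow_nonneg hS₁nn _
  have hN₂nn : 0 ≤ N₂ v := by rw [hN₂]; exact Real.rpow_nonneg hS₂nn _
  have hN₁p : N₁ u ^ p = S₁ := by
    rw [hN₁, one_div, Real.rpow_inv_rpow hS₁nn hpne]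
  have hN₂q : N₂ v ^ q = S₂ := by
    rw [hN₂, one_div, Real.rpow_inv_rpow hS₂nn hqne]
  set U := ∑ x ∈ Ω, μ x * |u x| ^ p with hUdef
  set W := ∑ x ∈ Ω, μ x * |v x| ^ q with hWdef
  have hUnn : 0 ≤ U :=
    Finset.sum_nonneg fun x _ => mul_nonneg (hμ x).le (Real.rpow_nonneg (abs_nonneg _) p)
  have hWnn : 0 ≤ W :=
    Finset.sum_nonneg fun x _ => mul_nonneg (hμ x).le (Real.rpow_nonneg (abs_nonneg _) q)
  have hU : U ≤ C₁ ^ p * S₁ := by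
    have h := Real.rpow_le_rpow (Real.rpow_nonneg hUnn (1 / p)) (hemb₁ u) hp0.le
    rwa [one_div, Real.rpow_inv_rpow hUnn hpne,
      Real.mul_rpow hC₁.le hN₁nn, hN₁p] at h
  have hW : W ≤ C₂ ^ q * S₂ := by
    have h := Real.rpow_le_rpow (Real.rpow_nonneg hWnn (1 / q)) (hemb₂ v) hq0.le
    rwa [one_div, Real.rpow_inv_rpow hWnn hqne,
      Real.mul_rpow hC₂.le hN₂nn, hN₂q] at h
  -- pointwise bound on F via FTC-type comparison + Young's inequality
  have hpoint : ∀ x ∈ Ω,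
      F x (u x) (v x) ≤ F x 0 0 + A / p * |u x| ^ p + B / q * |v x| ^ q := by
    intro x hx
    set s := u x with hsdef
    set t := v x with htdef
    have hdiff : Differentiable ℝ (fun st : ℝ × ℝ => F x st.1 st.2) :=
      (hF x).differentiable one_ne_zero
    have hg1 : Differentiable ℝ (fun s' => F x s' t) :=
      hdiff.comp (differentiable_id.prodMk (differentiable_const t))
    have hg2 : Differentiable ℝ (fun t' => F x 0 t') :=
      hdiff.comp ((differentiable_const 0).prodMk differentiable_id)
    have hb1 : |F x s t - F x 0 t| ≤
        f₁ x * |s| ^ p / p + (f₂ x * |t| ^ ((p * q - q) / p)) * |s| :=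
      growth_bound hg1 hp (fun r => hFs x hx r t) s
    have hβ : (0 : ℝ) < (p * q - p) / q := by
      apply div_pos _ hq0
      nlinarith
    have hb2 : |F x 0 t - F x 0 0| ≤ f₄ x * |t| ^ q / q + 0 * |t| := by
      refine growth_bound hg2 hq (fun r => ?_) t
      have h := hFt x hx 0 r
      rw [abs_zero, Real.zero_rpow hβ.ne', mul_zero, zero_add] at h
      linarith
    have hconj : p.HolderConjugate (p / (p - 1)) :=
      (Real.holderConjugate_iff_eq_conjExponent hp).2 rfl
    have hyoung := Real.young_inequality_of_nonneg (abs_nonneg s)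
      (Real.rpow_nonneg (abs_nonneg t) ((p * q - q) / p)) hconj
    have hp1 : p - 1 ≠ 0 := sub_ne_zero.2 hp.ne'
    have hexp : (|t| ^ ((p * q - q) / p)) ^ (p / (p - 1)) = |t| ^ q := by
      have hmul : (p * q - q) / p * (p / (p - 1)) = q := by
        field_simp
      rw [← Real.rpow_mul (abs_nonneg t), hmul]
    rw [hexp] at hyoung
    have hdiv : |t| ^ q / (p / (p - 1)) = |t| ^ q * ((p - 1) / p) := by
      rw [div_div_eq_mul_div]
      ring
    rw [hdiv] at hyoung
    -- hyoung : |s| * |t|^α ≤ |s|^p / p + |t|^q * ((p-1)/p)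
    have h3 : f₂ x * (|s| * |t| ^ ((p * q - q) / p)) ≤
        f₂ x * (|s| ^ p / p + |t| ^ q * ((p - 1) / p)) :=
      mul_le_mul_of_nonneg_left hyoung (hf₂ x)
    have h1 := (abs_le.1 hb1).2
    have h2 := (abs_le.1 hb2).2
    have hassoc : (f₂ x * |t| ^ ((p * q - q) / p)) * |s| =
        f₂ x * (|s| * |t| ^ ((p * q - q) / p)) := by ring
    rw [hassoc] at h1
    have step1 : F x s t ≤ F x 0 0 + (f₁ x * |s| ^ p / p +
        f₂ x * (|s| ^ p / p + |t| ^ q * ((p - 1) / p)) + f₄ x * |t| ^ q / q) := by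
      linarith
    have hf₁x : f₁ x ≤ a₁ := le_trans (le_abs_self _) (Finset.le_sup' (fun x => |f₁ x|) hx)
    have hf₂x : f₂ x ≤ a₂ := le_trans (le_abs_self _) (Finset.le_sup' (fun x => |f₂ x|) hx)
    have hf₄x : f₄ x ≤ a₄ := le_trans (le_abs_self _) (Finset.le_sup' (fun x => |f₄ x|) hx)
    have hsp : (0 : ℝ) ≤ |s| ^ p := Real.rpow_nonneg (abs_nonneg _) p
    have htq : (0 : ℝ) ≤ |t| ^ q := Real.rpow_nonneg (abs_nonneg _) q
    have step2 : f₁ x * |s| ^ p / p +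
        f₂ x * (|s| ^ p / p + |t| ^ q * ((p - 1) / p)) + f₄ x * |t| ^ q / q ≤
        a₁ * |s| ^ p / p + a₂ * (|s| ^ p / p + |t| ^ q * ((p - 1) / p)) +
          a₄ * |t| ^ q / q := by
      have hp10 : (0 : ℝ) ≤ (p - 1) / p := div_nonneg (by linarith) hp0.le
      have hmix : (0 : ℝ) ≤ |s| ^ p / p + |t| ^ q * ((p - 1) / p) :=
        add_nonneg (div_nonneg hsp hp0.le) (mul_nonneg htq hp10)
      gcongr
    have step3 : a₁ * |s| ^ p / p + a₂ * (|s| ^ p / p + |t| ^ q * ((p - 1) / p)) +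
        a₄ * |t| ^ q / q = A / p * |s| ^ p + B / q * |t| ^ q := by
      rw [hAdef, hBdef]
      field_simp
      ring
    linarith [step1, step2, step3.le, step3.ge]
  -- pass to the sums
  have hsum : ∑ x ∈ Ω, μ x * F x (u x) (v x) ≤ A / p * U + B / q * W := by
    calc ∑ x ∈ Ω, μ x * F x (u x) (v x)
        ≤ ∑ x ∈ Ω, (μ x * F x 0 0 + A / p * (μ x * |u x| ^ p) +
            B / q * (μ x * |v x| ^ q)) := by
          apply Finset.sum_le_sum
          intro x hx
          calc μ x * F x (u x) (v x)
              ≤ μ x * (F x 0 0 + A / p * |u x| ^ p + B / q * |v x| ^ q) :=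
                mul_le_mul_of_nonneg_left (hpoint x hx) (hμ x).le
            _ = μ x * F x 0 0 + A / p * (μ x * |u x| ^ p) +
                B / q * (μ x * |v x| ^ q) := by ring
      _ = (∑ x ∈ Ω, μ x * F x 0 0) + A / p * U + B / q * W := by
          rw [Finset.sum_add_distrib, Finset.sum_add_distrib, ← Finset.mul_sum,
            ← Finset.mul_sum]
      _ = A / p * U + B / q * W := by rw [h0]; ring
  have hfin : ∑ x ∈ Ω, μ x * F x (u x) (v x) ≤
      A / p * (C₁ ^ p * S₁) + B / q * (C₂ ^ q * S₂) := by
    refine hsum.trans (add_le_add ?_ ?_)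
    · exact mul_le_mul_of_nonneg_left hU (by positivity)
    · exact mul_le_mul_of_nonneg_left hW (by positivity)
  have e1 : K₁ * S₁ = 1 / p * S₁ - A / p * (C₁ ^ p * S₁) := by
    rw [hK₁def]; field_simp
  have e2 : K₂ * S₂ = 1 / q * S₂ - B / q * (C₂ ^ q * S₂) := by
    rw [hK₂def]; field_simp
  have hlow : K₁ * S₁ + K₂ * S₂ ≤
      1 / p * S₁ + 1 / q * S₂ - ∑ x ∈ Ω, μ x * F x (u x) (v x) := by
    rw [e1, e2]; linarith
  have hεlow : ε * (S₁ + S₂) ≤ K₁ * S₁ + K₂ * S₂ := by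
    have h1 := mul_le_mul_of_nonneg_right (min_le_left K₁ K₂) hS₁nn
    have h2 := mul_le_mul_of_nonneg_right (min_le_right K₁ K₂) hS₂nn
    rw [mul_add]
    exact add_le_add h1 h2
  -- lower bound on S₁ + S₂ from the norm condition
  set R := max 2 (2 * (|M| + 1) / ε) with hRdef
  have hR2 : (2 : ℝ) ≤ R := le_max_left _ _
  have hhalf : R / 2 ≤ S₁ + S₂ := by
    rcases le_total (N₁ u) (N₂ v) with hcase | hcase
    · have h : R / 2 ≤ N₂ v := by linarith
      have h1 : (1 : ℝ) ≤ N₂ v := by linarith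
      have h2 : N₂ v ^ (1 : ℝ) ≤ N₂ v ^ q := Real.rpow_le_rpow_of_exponent_le h1 hq.le
      rw [Real.rpow_one, hN₂q] at h2
      linarith
    · have h : R / 2 ≤ N₁ u := by linarith
      have h1 : (1 : ℝ) ≤ N₁ u := by linarith
      have h2 : N₁ u ^ (1 : ℝ) ≤ N₁ u ^ p := Real.rpow_le_rpow_of_exponent_le h1 hp.le
      rw [Real.rpow_one, hN₁p] at h2
      linarith
  have hM : |M| + 1 ≤ ε * (R / 2) := by
    have h := (div_le_iff₀ hε).mp (le_max_right 2 (2 * (|M| + 1) / ε))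
    linarith
  have hmono := mul_le_mul_of_nonneg_left hhalf hε.le
  have hMM : M ≤ |M| + 1 := by
    have := le_abs_self M
    linarith
  linarith
end
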